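/- For every simple graph G and positive integer t, χ(S[G,t]) ≤ χ(G) + 1. Moreover, for t ≥ 3 there is a proper (χ(G)+1)-coloring of S[G,t] in which the extra color is used only on vertices contracted at steps s ≥ 3. -/

import Mathlib

variable {V : Type*}

/-- Adjacency of the generalized Sierpiński graph `S(G,t)` on words of length `t`:
`u` and `v` are adjacent iff there is an index `i` with `u j = v j` for `j < i`,
`u i` adjacent to `v i` in `G`, and `u j = v i`, `v j = u i` for `j > i`. -/
def sierAdj (G : SimpleGraph V) (t : ℕ) (u v : Fin t → V) : Prop :=
  ∃ i : Fin t, (∀ j, j < i → u j = v j) ∧ G.Adj (u i) (v i) ∧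
    ∀ j, i < j → u j = v i ∧ v j = u i

/-- The generalized Sierpiński graph `S(G,t)`. -/
def sier (G : SimpleGraph V) (t : ℕ) : SimpleGraph (Fin t → V) where
  Adj := sierAdj G t
  symm := ⟨by
    rintro u v ⟨i, h1, h2, h3⟩
    exact ⟨i, fun j hj => (h1 j hj).symm, h2.symm,
      fun j hj => ⟨(h3 j hj).2, (h3 j hj).1⟩⟩⟩
  loopless := ⟨by
    rintro u ⟨i, h1, h2, h3⟩
    exact G.loopless.irrefl _ h2⟩

/-- `linkingAt G t p u v` : `uv` is a linking edge of `S(G,t)` appearing at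
(0-indexed) position `p < t - 1`; in the paper's terminology this linking edge is
produced at step `t - p`, and its contraction is a vertex contracted at step `t - p`. -/
def linkingAt (G : SimpleGraph V) (t p : ℕ) (u v : Fin t → V) : Prop :=
  ∃ i : Fin t, i.val = p ∧ i.val + 1 < t ∧ (∀ j, j < i → u j = v j) ∧
    G.Adj (u i) (v i) ∧ ∀ j, i < j → u j = v i ∧ v j = u i

/-- `uv` is a linking edge of `S(G,t)` (an edge appearing at some step `≥ 2`). -/
def linking (G : SimpleGraph V) (t : ℕ) (u v : Fin t → V) : Prop :=
  ∃ p, linkingAt G t p u v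

/-- The equivalence relation on words generated by identifying the two endpoints
of each linking edge. -/
def gasketSetoid (G : SimpleGraph V) (t : ℕ) : Setoid (Fin t → V) :=
  Relation.EqvGen.setoid (linking G t)

/-- The generalized Sierpiński gasket graph `S[G,t]`, obtained from `S(G,t)` by
contracting all linking edges. -/
def gasket (G : SimpleGraph V) (t : ℕ) :
    SimpleGraph (Quotient (gasketSetoid G t)) where
  Adj x y := x ≠ y ∧ ∃ u v, Quotient.mk (gasketSetoid G t) u = x ∧
    Quotient.mk (gasketSetoid G t) v = y ∧ sierAdj G t u v
  symm := ⟨by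
    rintro x y ⟨hxy, u, v, hu, hv, h⟩
    exact ⟨hxy.symm, v, u, hv, hu, (sier G t).symm.symm _ _ h⟩⟩
  loopless := ⟨fun _ h => h.1 rfl⟩

/-- The expanded word `i j j ... j`; for `ij ∈ E(G)` its class in `S[G,t]` is the
contracted vertex `{i,j}_t`. -/
def topWord (t : ℕ) (i j : V) : Fin t → V := fun k => if k.val = 0 then i else j

/-- `x` is a vertex of `S[G,t]` contracted at step `s` (the contraction of a linking
edge at position `t - s`). -/
def contractedVtxAtStep (G : SimpleGraph V) (t s : ℕ)
    (x : Quotient (gasketSetoid G t)) : Prop :=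
  ∃ u v, linkingAt G t (t - s) u v ∧ Quotient.mk (gasketSetoid G t) u = x

/-! ### Auxiliary construction for the coloring -/

/-- `u` is an endpoint of a linking edge at a position `≤ t - 3`, i.e. it belongs to a
class contracted at a step `≥ 3`. -/
def extraWord (G : SimpleGraph V) (t : ℕ) (u : Fin t → V) : Prop :=
  ∃ i : Fin t, ∃ _ : i.val + 2 < t,
    G.Adj (u i) (u ⟨t - 1, by omega⟩) ∧ ∀ j, i < j → u j = u ⟨t - 1, by omega⟩

open Classical in
/-- The explicit coloring on words: extra color on step-`≥3` words, otherwise the sum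
(mod `m+1`) of the colors of the last two letters. -/
noncomputable def gColor (G : SimpleGraph V) {t : ℕ} (ht : 1 ≤ t) {m : ℕ}
    (c : V → Fin (m + 1)) (u : Fin t → V) : Fin (m + 2) :=
  if extraWord G t u then Fin.last (m + 1)
  else Fin.castLE (by omega)
    (c (u ⟨t - 1, by omega⟩) + if 2 ≤ t then c (u ⟨t - 2, by omega⟩) else 0)


lemma fin_lt_mk {t : ℕ} (i : Fin t) (a : ℕ) (h : a < t) (hv : i.val < a) :
    i < (⟨a, h⟩ : Fin t) := hv

lemma fin_mk_lt {t a : ℕ} (h : a < t) (i : Fin t) (hv : a < i.val) :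
    (⟨a, h⟩ : Fin t) < i := hv

lemma fin_mk_eq {t a : ℕ} (h : a < t) (i : Fin t) (hv : a = i.val) :
    (⟨a, h⟩ : Fin t) = i := Fin.ext hv

lemma castLE_ne_last {m : ℕ} (h : m + 1 ≤ m + 2) (x : Fin (m + 1)) :
    Fin.castLE h x ≠ Fin.last (m + 1) := by
  simp only [Fin.ne_iff_vne, Fin.coe_castLE, Fin.val_last]
  omega

lemma gColor_linking {G : SimpleGraph V} {t : ℕ} (ht : 1 ≤ t) {m : ℕ}
    (c : V → Fin (m + 1)) {u v : Fin t → V} (h : linking G t u v) :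
    gColor G ht c u = gColor G ht c v := by
  obtain ⟨p, i, hip, hit, hpre, hadj, htl⟩ := h
  have hiL : ∀ h' : t - 1 < t, i < (⟨t - 1, h'⟩ : Fin t) :=
    fun h' => fin_lt_mk i (t - 1) h' (by omega)
  have huL : ∀ h' : t - 1 < t, u ⟨t - 1, h'⟩ = v i := fun h' => (htl _ (hiL h')).1
  have hvL : ∀ h' : t - 1 < t, v ⟨t - 1, h'⟩ = u i := fun h' => (htl _ (hiL h')).2
  by_cases hc : i.val + 2 < t
  · have eu : extraWord G t u :=
      ⟨i, hc, by rw [huL]; exact hadj, fun j hj => by rw [(htl j hj).1, huL]⟩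
    have ev : extraWord G t v :=
      ⟨i, hc, by rw [hvL]; exact hadj.symm, fun j hj => by rw [(htl j hj).2, hvL]⟩
    simp [gColor, eu, ev]
  · have hi2 : ↑i + 2 = t := by omega
    have eu : ¬ extraWord G t u := by
      rintro ⟨i', hi', hadj', htl'⟩
      have h1 : i' < i := by
        have : i'.val < i.val := by omega
        exact this
      have h2 := htl' i h1
      rw [huL] at h2
      exact hadj.ne h2
    have ev : ¬ extraWord G t v := by
      rintro ⟨i', hi', hadj', htl'⟩
      have h1 : i' < i := by
        have : i'.val < i.val := by omega
        exact this
      have h2 := htl' i h1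
      rw [hvL] at h2
      exact hadj.ne h2.symm
    have ht2 : 2 ≤ t := by omega
    have hsl : ∀ h' : t - 2 < t, (⟨t - 2, h'⟩ : Fin t) = i :=
      fun h' => fin_mk_eq h' i (by omega)
    simp only [gColor, if_neg eu, if_neg ev, if_pos ht2]
    rw [huL, hvL, hsl]
    exact congrArg _ (add_comm _ _)

lemma gColor_ne {G : SimpleGraph V} {t : ℕ} (ht : 1 ≤ t) {m : ℕ}
    {c : V → Fin (m + 1)} (hc : ∀ {a b : V}, G.Adj a b → c a ≠ c b)
    {u v : Fin t → V} {i : Fin t} (hi : i.val + 1 = t)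
    (hpre : ∀ j, j < i → u j = v j) (hadj : G.Adj (u i) (v i)) :
    gColor G ht c u ≠ gColor G ht c v := by
  have hb : t - 1 < t := by omega
  have hA : (⟨t - 1, hb⟩ : Fin t) = i := fin_mk_eq hb i (by omega)
  by_cases eu : extraWord G t u <;> by_cases ev : extraWord G t v
  · exfalso
    obtain ⟨i1, h1, _, tl1⟩ := eu
    obtain ⟨i2, h2, _, tl2⟩ := ev
    have ha : t - 2 < t := by omega
    have hsl_lt : (⟨t - 2, ha⟩ : Fin t) < i := fin_mk_lt ha i (by omega)
    have e1 : u ⟨t - 2, ha⟩ = u ⟨t - 1, hb⟩ := tl1 _ (fin_lt_mk i1 (t - 2) ha (by omega))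
    have e2 : v ⟨t - 2, ha⟩ = v ⟨t - 1, hb⟩ := tl2 _ (fin_lt_mk i2 (t - 2) ha (by omega))
    have e3 : u ⟨t - 2, ha⟩ = v ⟨t - 2, ha⟩ := hpre _ hsl_lt
    have e4 : u i = v i :=
      ((congrArg u hA).symm.trans (e1.symm.trans (e3.trans e2))).trans (congrArg v hA)
    exact hadj.ne e4
  · simp only [gColor, if_pos eu, if_neg ev]
    exact (castLE_ne_last _ _).symm
  · simp only [gColor, if_neg eu, if_pos ev]
    exact castLE_ne_last _ _
  · simp only [gColor, if_neg eu, if_neg ev]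
    intro hcontra
    have h2 := Fin.castLE_injective _ hcontra
    have key : c (u ⟨t - 1, hb⟩) = c (v ⟨t - 1, hb⟩) := by
      by_cases h2t : 2 ≤ t
      · rw [if_pos h2t, if_pos h2t] at h2
        have ha : t - 2 < t := by omega
        have hsl_lt : (⟨t - 2, ha⟩ : Fin t) < i := fin_mk_lt ha i (by omega)
        have hsl : u ⟨t - 2, ha⟩ = v ⟨t - 2, ha⟩ := hpre _ hsl_lt
        rw [hsl] at h2
        exact add_right_cancel h2
      · rw [if_neg h2t, if_neg h2t] at h2
        exact add_right_cancel h2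
    have e4 : c (u i) = c (v i) :=
      ((congrArg (fun j => c (u j)) hA).symm.trans key).trans (congrArg (fun j => c (v j)) hA)
    exact hc hadj e4

lemma extraWord_step {G : SimpleGraph V} {t : ℕ} {u : Fin t → V} (h : extraWord G t u) :
    ∃ s, 3 ≤ s ∧ s ≤ t ∧ contractedVtxAtStep G t s (Quotient.mk (gasketSetoid G t) u) := by
  obtain ⟨i, hi, hadj, htl⟩ := h
  have hlast : t - 1 < t := by omega
  refine ⟨t - i.val, by omega, by omega, u,
    fun j => if j < i then u j else if j = i then u ⟨t - 1, hlast⟩ else u i,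
    ⟨i, by omega, by omega, ?_, ?_, ?_⟩, rfl⟩
  · intro j hj; simp [hj]
  · simpa using hadj
  · intro j hj
    have h1 : ¬ j < i := not_lt.2 hj.le
    have h2 : j ≠ i := hj.ne'
    refine ⟨?_, by simp [h1, h2]⟩
    simp only [if_neg h1, if_neg h2, lt_irrefl, if_neg (lt_irrefl i), if_pos rfl]
    exact htl j hj

lemma gasket_coloring (G : SimpleGraph V) (t k : ℕ) (ht : 1 ≤ t) (hk : G.Colorable k) :
    ∃ c : (gasket G t).Coloring (Fin (k + 1)),
      ∀ x, c x = Fin.last k → ∃ s, 3 ≤ s ∧ s ≤ t ∧ contractedVtxAtStep G t s x := by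
  by_cases hV : IsEmpty V
  · haveI : IsEmpty (Fin t → V) := ⟨fun f => hV.false (f ⟨0, ht⟩)⟩
    haveI : IsEmpty (Quotient (gasketSetoid G t)) := by
      constructor
      intro x
      induction x using Quotient.ind
      exact isEmptyElim ‹_›
    exact ⟨(gasket G t).coloringOfIsEmpty, fun x => isEmptyElim x⟩
  · haveI : Nonempty V := not_isEmpty_iff.mp hV
    obtain ⟨c0⟩ := hk
    rcases Nat.eq_zero_or_pos k with rfl | hk1
    · exact (c0 (Classical.arbitrary V)).elim0
    · obtain ⟨m, rfl⟩ : ∃ m, k = m + 1 := ⟨k - 1, by omega⟩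
      have hconst : ∀ a b, (gasketSetoid G t).r a b →
          gColor G ht (⇑c0) a = gColor G ht (⇑c0) b := by
        intro a b hab
        induction hab with
        | rel x y h => exact gColor_linking ht _ h
        | refl => rfl
        | symm _ _ _ ih => exact ih.symm
        | trans _ _ _ _ _ ih1 ih2 => exact ih1.trans ih2
      refine ⟨SimpleGraph.Coloring.mk (Quotient.lift (gColor G ht (⇑c0)) hconst) ?_, ?_⟩
      · intro x y hxy
        obtain ⟨hne, u, v, rfl, rfl, i, hpre, hadj, htl⟩ := hxy
        by_cases hi : i.val + 1 < t
        · exact absurd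
            (Quotient.sound (Relation.EqvGen.rel _ _ ⟨i.val, i, rfl, hi, hpre, hadj, htl⟩)) hne
        · exact gColor_ne ht (fun hab => c0.valid hab) (by omega) hpre hadj
      · intro x hx
        obtain ⟨u, rfl⟩ := Quotient.exists_rep x
        have hgu : gColor G ht (⇑c0) u = Fin.last (m + 1) := hx
        have hext : extraWord G t u := by
          by_contra he
          rw [gColor, if_neg he] at hgu
          exact castLE_ne_last _ _ hgu
        exact extraWord_step hext

/-- `χ(S[G,t]) ≤ χ(G) + 1`; moreover for `t ≥ 3` there is a proper
`(k+1)`-coloring of `S[G,t]` (where `G` is `k`-colorable) in which the extra color is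
used only on vertices contracted at steps `s ≥ 3`. -/
theorem stmt_15 (G : SimpleGraph V) (t : ℕ) (ht : 1 ≤ t) :
    (gasket G t).chromaticNumber ≤ G.chromaticNumber + 1 ∧
    (3 ≤ t → ∀ k : ℕ, G.Colorable k →
      ∃ c : (gasket G t).Coloring (Fin (k + 1)),
        ∀ x, c x = Fin.last k → ∃ s, 3 ≤ s ∧ s ≤ t ∧ contractedVtxAtStep G t s x) := by
  constructor
  · by_cases htop : G.chromaticNumber = ⊤
    · rw [htop, top_add]
      exact le_top
    · have hcol := G.colorable_of_chromaticNumber_ne_top htop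
      set n := ENat.toNat G.chromaticNumber with hn
      obtain ⟨c, -⟩ := gasket_coloring G t n ht hcol
      have : (gasket G t).Colorable (n + 1) := ⟨c⟩
      refine le_trans this.chromaticNumber_le ?_
      have hχ : G.chromaticNumber = (n : ℕ∞) := (ENat.coe_toNat htop).symm
      rw [hχ]
      push_cast
      rfl
  · intro _ k hk
    exact gasket_coloring G t k ht hk
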